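/- If G is an r-uniform hypergraph on [n], φ is a permutation of [n], and m is the number of choosable pairs for (G,φ), then the number of r-uniform hypergraphs H on [n] satisfying φ(G \ H) = H \ G is at most 2^m. -/

import Mathlib

/-- the number of H with φ(G \ H) = H \ G is at most 2^m, where m is
the number of choosable pairs for (G, φ). -/
theorem stmt_1 (n r m : ℕ) (φ : Equiv.Perm (Fin n)) (G : Finset (Finset (Fin n)))
    (hG : ∀ e ∈ G, e.card = r)
    (hm : m = (Finset.filter
      (fun p : Finset (Fin n) × Finset (Fin n) => p.1.image φ = p.2 ∧ p.1 ∈ G ∧ p.2 ∉ G)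
      (Finset.univ ×ˢ Finset.univ)).card) :
    ((Finset.univ : Finset (Finset (Finset (Fin n)))).filter
      (fun H => (∀ e ∈ H, e.card = r) ∧ (G \ H).image (Finset.image φ) = H \ G)).card
      ≤ 2 ^ m := by
  classical
  set S : Finset (Finset (Fin n)) := G.filter (fun e => e.image φ ∉ G) with hS
  have hmS : m = S.card := by
    rw [hm]
    apply Finset.card_bij (fun p _ => p.1)
    · intro p hp
      simp only [Finset.mem_filter, Finset.mem_product] at hp
      simp only [hS, Finset.mem_filter]
      refine ⟨hp.2.2.1, ?_⟩
      rw [hp.2.1]; exact hp.2.2.2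
    · intro p hp q hq hpq
      simp only [Finset.mem_filter] at hp hq
      exact Prod.ext hpq (by rw [← hp.2.1, ← hq.2.1, hpq])
    · intro e he
      simp only [hS, Finset.mem_filter] at he
      refine ⟨(e, e.image φ), ?_, rfl⟩
      simp [he.1, he.2]
  rw [hmS, ← Finset.card_powerset S]
  apply Finset.card_le_card_of_injOn (fun H => G \ H)
  · intro H hH
    simp only [Finset.mem_coe, Finset.mem_filter] at hH
    simp only [Finset.mem_coe, Finset.mem_powerset]
    intro e he
    have hmem : e.image φ ∈ H \ G := by
      rw [← hH.2.2]
      exact Finset.mem_image_of_mem _ he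
    rw [Finset.mem_sdiff] at he hmem
    simp only [hS, Finset.mem_filter]
    exact ⟨he.1, hmem.2⟩
  · intro H₁ h₁ H₂ h₂ heq
    simp only [Finset.mem_coe, Finset.mem_filter] at h₁ h₂
    simp only at heq
    ext a
    by_cases ha : a ∈ G
    · constructor
      · intro haH
        by_contra haH₂
        have : a ∈ G \ H₂ := Finset.mem_sdiff.mpr ⟨ha, haH₂⟩
        rw [← heq, Finset.mem_sdiff] at this
        exact this.2 haH
      · intro haH
        by_contra haH₁
        have : a ∈ G \ H₁ := Finset.mem_sdiff.mpr ⟨ha, haH₁⟩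
        rw [heq, Finset.mem_sdiff] at this
        exact this.2 haH
    · constructor
      · intro haH
        have : a ∈ H₁ \ G := Finset.mem_sdiff.mpr ⟨haH, ha⟩
        rw [← h₁.2.2, heq, h₂.2.2, Finset.mem_sdiff] at this
        exact this.1
      · intro haH
        have : a ∈ H₂ \ G := Finset.mem_sdiff.mpr ⟨haH, ha⟩
        rw [← h₂.2.2, ← heq, h₁.2.2, Finset.mem_sdiff] at this
        exact this.1
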